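/- For eventually periodic strings: if α = x u^ω and β = y v^ω with finite nonempty words x, y, u, v such that the set of letters occurring in x is contained in the set of letters occurring in y, and the set of letters occurring in u is contained in the set of letters occurring in v, then there is a quasi-isometry from α to β. -/
import Mathlib

open Classical in
noncomputable def epIdx {Γ : Type*} (l : List Γ) (a : Γ) : ℕ :=
  if h : a ∈ l then (List.mem_iff_getElem.mp h).choose else 0

lemma epIdx_lt {Γ : Type*} {l : List Γ} {a : Γ} (h : a ∈ l) : epIdx l a < l.length := by
  rw [epIdx, dif_pos h]
  exact (List.mem_iff_getElem.mp h).choose_spec.choose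

lemma epIdx_getD {Γ : Type*} [Inhabited Γ] {l : List Γ} {a : Γ} (h : a ∈ l) :
    l.getD (epIdx l a) default = a := by
  rw [epIdx, dif_pos h]
  obtain ⟨hlt, heq⟩ := (List.mem_iff_getElem.mp h).choose_spec
  rw [List.getD_eq_getElem _ _ hlt]
  exact heq

noncomputable def epF {Γ : Type*} [Inhabited Γ] (x y u v : List Γ) : ℕ → ℕ := fun n =>
  if n < x.length then epIdx y (x.getD n default)
  else y.length + v.length * ((n - x.length) / u.length)
       + epIdx v (u.getD ((n - x.length) % u.length) default)

def IsQI {Γ : Type*} (α β : ℕ → Γ) (f : ℕ → ℕ) (A B : ℝ) : Prop :=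
  1 ≤ A ∧ 0 ≤ B ∧ (∀ n, α n = β (f n)) ∧
  (∀ x y : ℕ, (1 / A) * |(x : ℝ) - (y : ℝ)| - B ≤ |(f x : ℝ) - (f y : ℝ)| ∧
      |(f x : ℝ) - (f y : ℝ)| ≤ A * |(x : ℝ) - (y : ℝ)| + B) ∧
  (∀ m : ℕ, ∃ x : ℕ, |(m : ℝ) - (f x : ℝ)| ≤ A)

/-- `α ≤_QI β`: there is a quasi-isometry from `α` to `β`. -/
def QI {Γ : Type*} (α β : ℕ → Γ) : Prop := ∃ f A B, IsQI α β f A B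

/-- The eventually periodic string `x u^ω` (prefix `x` followed by infinitely many
copies of `u`). -/
def epString {Γ : Type*} [Inhabited Γ] (x u : List Γ) : ℕ → Γ := fun i =>
  if i < x.length then x.getD i default else u.getD ((i - x.length) % u.length) default

set_option maxHeartbeats 1600000 in
/-- If `α = x u^ω`, `β = y v^ω`, every letter of `x` occurs in `y` and every letter
of `u` occurs in `v`, then there is a quasi-isometry from `α` to `β`. -/
theorem eventually_periodic_QI {Γ : Type*} [Inhabited Γ] (x y u v : List Γ)
    (hx : x ≠ []) (hy : y ≠ []) (hu : u ≠ []) (hv : v ≠ [])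
    (hxy : ∀ a ∈ x, a ∈ y) (huv : ∀ a ∈ u, a ∈ v) :
    QI (epString x u) (epString y v) := by
  have hX : 0 < x.length := List.length_pos_iff.mpr hx
  have hY : 0 < y.length := List.length_pos_iff.mpr hy
  have hU : 0 < u.length := List.length_pos_iff.mpr hu
  have hV : 0 < v.length := List.length_pos_iff.mpr hv
  set X := x.length with hXd
  set Y := y.length with hYd
  set U := u.length with hUd
  set V := v.length with hVd
  set f := epF x y u v with hfd
  set C : ℕ := X + Y + U + V with hCd
  have hC4 : 4 ≤ C := by omega
  have castle : ∀ a b : ℕ, a ≤ b → (a:ℤ) ≤ b := fun a b h => Int.ofNat_le.mpr h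
  -- membership facts
  have hax : ∀ n, n < X → x.getD n default ∈ y := by
    intro n hn
    apply hxy
    rw [List.getD_eq_getElem _ _ hn]
    exact List.getElem_mem _
  have hau : ∀ n : ℕ, u.getD ((n - X) % U) default ∈ v := by
    intro n
    apply huv
    rw [List.getD_eq_getElem _ _ (Nat.mod_lt _ hU)]
    exact List.getElem_mem _
  have hjlt : ∀ n : ℕ, epIdx v (u.getD ((n - X) % U) default) < V := fun n => epIdx_lt (hau n)
  have hflt : ∀ n, n < X → f n < Y := by
    intro n hn
    show epF x y u v n < Y
    rw [epF, if_pos hn]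
    exact epIdx_lt (hax n hn)
  have hfeq : ∀ n, X ≤ n → f n = Y + V * ((n - X) / U)
      + epIdx v (u.getD ((n - X) % U) default) := by
    intro n hn
    show epF x y u v n = _
    rw [epF, if_neg (not_lt.mpr hn)]
  -- correctness
  have hcorr : ∀ n, epString x u n = epString y v (f n) := by
    intro n
    by_cases hn : n < X
    · have h1 : f n < Y := hflt n hn
      have h2 : f n = epIdx y (x.getD n default) := by
        show epF x y u v n = _
        rw [epF, if_pos hn]
      rw [epString, epString]
      rw [if_pos hn, if_pos h1, h2, epIdx_getD (hax n hn)]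
    · push_neg at hn
      have h1 : ¬ f n < Y := by rw [hfeq n hn]; omega
      rw [epString, epString]
      rw [if_neg (not_lt.mpr hn), if_neg h1, hfeq n hn]
      have h2 : Y + V * ((n - X) / U) + epIdx v (u.getD ((n - X) % U) default) - Y
          = V * ((n - X) / U) + epIdx v (u.getD ((n - X) % U) default) := by omega
      rw [h2, Nat.mul_add_mod, Nat.mod_eq_of_lt (hjlt n), epIdx_getD (hau n)]
  -- structural description of f on the periodic part
  have hQ : ∀ k, X ≤ k → ∃ q j : ℕ, j < V ∧ f k = Y + V * q + j ∧
      U * q ≤ k - X ∧ k - X < U * q + U := by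
    intro k hk
    refine ⟨(k - X) / U, epIdx v (u.getD ((k - X) % U) default), hjlt k, hfeq k hk, ?_, ?_⟩
    · exact Nat.le.intro (Nat.div_add_mod (k - X) U)
    · have h := Nat.div_add_mod (k - X) U
      have hm := Nat.mod_lt (k - X) hU
      calc k - X = U * ((k - X) / U) + (k - X) % U := h.symm
        _ < U * ((k - X) / U) + U := Nat.add_lt_add_left hm _
  -- key integer estimates
  have key : ∀ n m : ℕ, n ≤ m →
      |(f m : ℤ) - f n| ≤ V * ((m:ℤ) - n) + (Y + 2 * V) ∧
      (m:ℤ) - n ≤ U * |(f m : ℤ) - f n| + (X + U * Y + U + U * V) := by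
    intro n m hnm
    have habs1 : ((f m : ℤ) - f n) ≤ |(f m : ℤ) - f n| := le_abs_self _
    have habs2 : -|(f m : ℤ) - f n| ≤ ((f m : ℤ) - f n) := neg_abs_le _
    have habs0 : (0:ℤ) ≤ |(f m : ℤ) - f n| := abs_nonneg _
    have hmn : (n:ℤ) ≤ m := by exact_mod_cast hnm
    have hUV : (0:ℤ) ≤ (U:ℤ) * V := by positivity
    have hUY : (0:ℤ) ≤ (U:ℤ) * Y := by positivity
    have hUabs : (0:ℤ) ≤ (U:ℤ) * |(f m : ℤ) - f n| := by positivity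
    have hVmn : (0:ℤ) ≤ (V:ℤ) * ((m:ℤ) - n) := by
      apply mul_nonneg (by positivity); linarith
    have hU1 : (1:ℤ) ≤ U := by exact_mod_cast hU
    have hV1 : (1:ℤ) ≤ V := by exact_mod_cast hV
    have hXZ : (0:ℤ) ≤ X := Int.natCast_nonneg _
    rcases lt_or_ge m X with hmX | hmX
    · -- both in prefix
      have hnX : n < X := lt_of_le_of_lt hnm hmX
      have h1 : (f n : ℤ) < Y := by exact_mod_cast hflt n hnX
      have h2 : (f m : ℤ) < Y := by exact_mod_cast hflt m hmX
      have h3 : (0:ℤ) ≤ f n := Int.natCast_nonneg _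
      have h4 : (0:ℤ) ≤ f m := Int.natCast_nonneg _
      have h5 : (m:ℤ) < X := by exact_mod_cast hmX
      have h6 : (0:ℤ) ≤ n := Int.natCast_nonneg _
      constructor
      · rw [abs_le]; constructor <;> linarith
      · linarith
    · obtain ⟨qm, jm, hjm, hfm, hm1, hm2⟩ := hQ m hmX
      have zfm : (f m : ℤ) = Y + V * qm + jm := by rw [hfm]; push_cast; ring
      have zjm : (jm:ℤ) < V := by exact_mod_cast hjm
      have zjm0 : (0:ℤ) ≤ jm := Int.natCast_nonneg _
      have zqm0 : (0:ℤ) ≤ qm := Int.natCast_nonneg _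
      have zm1 : (U:ℤ) * qm ≤ (m:ℤ) - X := by
        have h := castle _ _ hm1
        push_cast at h
        omega
      have zm2 : (m:ℤ) - X < U * qm + U := by
        have h := castle _ _ hm2
        push_cast at h
        omega
      have hVqm : (0:ℤ) ≤ (V:ℤ) * qm := by positivity
      rcases lt_or_ge n X with hnX | hnX
      · -- n in prefix, m in periodic part
        have h1 : (f n : ℤ) < Y := by exact_mod_cast hflt n hnX
        have h3 : (0:ℤ) ≤ f n := Int.natCast_nonneg _
        have h5 : (n:ℤ) < X := by exact_mod_cast hnX
        have hUq : (qm:ℤ) ≤ (U:ℤ) * qm := by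
          have h := mul_le_mul_of_nonneg_right hU1 zqm0
          linarith
        have hq1 : (qm : ℤ) ≤ (m:ℤ) - n := by linarith
        have p6 : (V:ℤ) * qm ≤ V * ((m:ℤ) - n) :=
          mul_le_mul_of_nonneg_left hq1 (by positivity)
        have hfmfn : (0:ℤ) ≤ (f m : ℤ) - f n := by rw [zfm]; linarith
        have habsval : |(f m : ℤ) - f n| = (f m : ℤ) - f n := abs_of_nonneg hfmfn
        have hVq : (qm:ℤ) ≤ (V:ℤ) * qm := by
          have h := mul_le_mul_of_nonneg_right hV1 zqm0
          linarith
        have hq2 : (qm : ℤ) ≤ (f m : ℤ) - f n := by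
          rw [zfm]; linarith
        have p8 : (U:ℤ) * qm ≤ U * |(f m : ℤ) - f n| := by
          rw [habsval]; exact mul_le_mul_of_nonneg_left hq2 (by positivity)
        constructor
        · rw [habsval, zfm]; linarith
        · linarith
      · -- both in periodic part
        obtain ⟨qn, jn, hjn, hfn, hn1, hn2⟩ := hQ n hnX
        have zfn : (f n : ℤ) = Y + V * qn + jn := by rw [hfn]; push_cast; ring
        have zjn : (jn:ℤ) < V := by exact_mod_cast hjn
        have zjn0 : (0:ℤ) ≤ jn := Int.natCast_nonneg _
        have zqn0 : (0:ℤ) ≤ qn := Int.natCast_nonneg _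
        have zn1 : (U:ℤ) * qn ≤ (n:ℤ) - X := by
          have h := castle _ _ hn1
          push_cast at h
          omega
        have zn2 : (n:ℤ) - X < U * qn + U := by
          have h := castle _ _ hn2
          push_cast at h
          omega
        -- monotonicity : qn ≤ qm
        have hmono : (qn:ℤ) ≤ qm := by
          by_contra hcon
          push_neg at hcon
          have h' : (qm:ℤ) + 1 ≤ qn := by omega
          have hmul : (U:ℤ) * (qm + 1) ≤ U * qn :=
            mul_le_mul_of_nonneg_left h' (by positivity)
          linarith
        -- step : qm ≤ qn + (m - n)
        have hstep : (qm:ℤ) ≤ qn + ((m:ℤ) - n) := by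
          by_contra hcon
          push_neg at hcon
          have h' : (qn:ℤ) + ((m:ℤ) - n) + 1 ≤ qm := by omega
          have hmul : (U:ℤ) * (qn + ((m:ℤ) - n) + 1) ≤ U * qm :=
            mul_le_mul_of_nonneg_left h' (by positivity)
          have hUmn : ((m:ℤ) - n) ≤ (U:ℤ) * ((m:ℤ) - n) := by
            have h := mul_le_mul_of_nonneg_right hU1 (show (0:ℤ) ≤ (m:ℤ) - n by linarith)
            linarith
          linarith
        have pV : (V:ℤ) * qm ≤ V * (qn + ((m:ℤ) - n)) :=
          mul_le_mul_of_nonneg_left hstep (by positivity)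
        have pV2 : (V:ℤ) * qn ≤ V * qm :=
          mul_le_mul_of_nonneg_left hmono (by positivity)
        have pV3 : (qm:ℤ) - qn ≤ V * qm - V * qn := by
          have h := mul_le_mul_of_nonneg_right hV1 (show (0:ℤ) ≤ (qm:ℤ) - qn by linarith)
          have h2 : (V:ℤ) * ((qm:ℤ) - qn) = V * qm - V * qn := by ring
          linarith
        constructor
        · rw [abs_le]; constructor
          · rw [zfm, zfn]; linarith
          · rw [zfm, zfn]; linarith
        · have hd : (qm:ℤ) - qn ≤ |(f m : ℤ) - f n| + V := by
            have : (qm:ℤ) - qn - V ≤ (f m : ℤ) - f n := by rw [zfm, zfn]; linarith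
            linarith
          have pU : (U:ℤ) * ((qm:ℤ) - qn) ≤ U * (|(f m : ℤ) - f n| + V) :=
            mul_le_mul_of_nonneg_left hd (by positivity)
          linarith
  -- density
  have hdense : ∀ k : ℕ, ∃ w : ℕ, |(k:ℤ) - f w| ≤ C := by
    intro k
    obtain ⟨p, hp⟩ : ∃ p, (k - Y) / V = p := ⟨_, rfl⟩
    refine ⟨X + p * U, ?_⟩
    have hge : X ≤ X + p * U := Nat.le_add_right _ _
    obtain ⟨q, j, hj, hfw, h1, h2⟩ := hQ _ hge
    have hsub : X + p * U - X = p * U := by omega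
    rw [hsub] at h1 h2
    have hqp : q = p := by
      have e1 : U * q ≤ U * p := by
        calc U * q ≤ p * U := h1
          _ = U * p := Nat.mul_comm _ _
      have e2 : U * p < U * (q + 1) := by
        calc U * p = p * U := Nat.mul_comm _ _
          _ < U * q + U := h2
          _ = U * (q + 1) := by ring
      have e3 : q ≤ p := Nat.le_of_mul_le_mul_left e1 hU
      have e4 : p < q + 1 := Nat.lt_of_mul_lt_mul_left e2
      omega
    rw [hqp] at hfw
    have zf : (f (X + p * U) : ℤ) = Y + V * p + j := by
      rw [hfw]; push_cast; ring
    have zj : (j:ℤ) < V := by exact_mod_cast hj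
    have zj0 : (0:ℤ) ≤ j := Int.natCast_nonneg _
    have hVC : (V:ℤ) ≤ C := by exact_mod_cast (by omega : V ≤ C)
    have hYVC : (Y:ℤ) + V ≤ C := by exact_mod_cast (by omega : Y + V ≤ C)
    rcases le_or_gt Y k with hk | hk
    · have hd1 : V * p ≤ k - Y := by
        rw [← hp]; exact Nat.le.intro (Nat.div_add_mod (k - Y) V)
      have hd2 : k - Y < V * p + V := by
        rw [← hp]
        have h := Nat.div_add_mod (k - Y) V
        have hm := Nat.mod_lt (k - Y) hV
        omega
      have zd1 : (V:ℤ) * p ≤ (k:ℤ) - Y := by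
        have h := castle _ _ hd1
        push_cast at h
        omega
      have zd2 : (k:ℤ) - Y < V * p + V := by
        have h := castle _ _ hd2
        push_cast at h
        omega
      rw [zf, abs_le]
      constructor <;> linarith
    · have hq0 : p = 0 := by
        rw [← hp]
        have : k - Y = 0 := by omega
        rw [this]; exact Nat.zero_div _
      rw [hq0] at zf ⊢
      have zk : (k:ℤ) < Y := by exact_mod_cast hk
      have zk0 : (0:ℤ) ≤ k := Int.natCast_nonneg _
      rw [zf, abs_le]
      push_cast
      constructor <;> linarith
  -- assemble the quasi-isometry
  refine ⟨f, (C:ℝ), (C:ℝ)^3, ?_, by positivity, hcorr, ?_, ?_⟩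
  · exact_mod_cast Nat.one_le_cast.mpr (by omega : (1:ℕ) ≤ C)
  · -- the two-sided bounds
    have hCR : (4:ℝ) ≤ C := by exact_mod_cast hC4
    have hCpos : (0:ℝ) < C := by linarith
    have hXC : (X:ℝ) ≤ C := Nat.cast_le.mpr (by omega)
    have hYC : (Y:ℝ) ≤ C := Nat.cast_le.mpr (by omega)
    have hUC : (U:ℝ) ≤ C := Nat.cast_le.mpr (by omega)
    have hVC : (V:ℝ) ≤ C := Nat.cast_le.mpr (by omega)
    have hCC : (16:ℝ) ≤ C * C := by nlinarith
    have hCle : (C:ℝ) ≤ C * C := by nlinarith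
    have hU0 : (0:ℝ) ≤ U := by positivity
    have hY0 : (0:ℝ) ≤ Y := by positivity
    have hV0 : (0:ℝ) ≤ V := by positivity
    have keyR : ∀ n m : ℕ, n ≤ m →
        |(f m : ℝ) - f n| ≤ C * ((m:ℝ) - n) + (C:ℝ)^3 ∧
        (1/(C:ℝ)) * ((m:ℝ) - n) - (C:ℝ)^3 ≤ |(f m : ℝ) - f n| := by
      intro n m hnm
      obtain ⟨k1, k2⟩ := key n m hnm
      have r1 : |(f m : ℝ) - f n| ≤ V * ((m:ℝ) - n) + (Y + 2*V) := by exact_mod_cast k1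
      have r2 : (m:ℝ) - n ≤ U * |(f m : ℝ) - f n| + (X + U*Y + U + U*V) := by
        exact_mod_cast k2
      have hmn : (n:ℝ) ≤ m := by exact_mod_cast hnm
      have habs0 : (0:ℝ) ≤ |(f m : ℝ) - f n| := abs_nonneg _
      constructor
      · have p1 : (V:ℝ) * ((m:ℝ) - n) ≤ C * ((m:ℝ) - n) :=
          mul_le_mul_of_nonneg_right hVC (by linarith)
        have p2 : (Y:ℝ) + 2*V ≤ (C:ℝ)^3 := by
          have h1 : (3:ℝ) * C ≤ (C*C) * C :=
            mul_le_mul_of_nonneg_right (by linarith) (by linarith)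
          have h2 : ((C:ℝ)*C) * C = (C:ℝ)^3 := by ring
          linarith
        linarith
      · have p3 : (U:ℝ) * |(f m : ℝ) - f n| ≤ C * |(f m : ℝ) - f n| :=
          mul_le_mul_of_nonneg_right hUC habs0
        have hUYC : (U:ℝ) * Y ≤ C * C := mul_le_mul hUC hYC hY0 (le_of_lt hCpos)
        have hUVC : (U:ℝ) * V ≤ C * C := mul_le_mul hUC hVC hV0 (le_of_lt hCpos)
        have p4 : (X:ℝ) + U*Y + U + U*V ≤ C * (C:ℝ)^3 := by
          have h1 : (4:ℝ) * (C*C) ≤ (C*C) * (C*C) :=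
            mul_le_mul_of_nonneg_right (by linarith) (by nlinarith)
          have h2 : ((C:ℝ)*C) * (C*C) = C * (C:ℝ)^3 := by ring
          linarith
        have p5 : (m:ℝ) - n ≤ C * (|(f m : ℝ) - f n| + (C:ℝ)^3) := by
          have : (C:ℝ) * (|(f m : ℝ) - f n| + (C:ℝ)^3)
              = C * |(f m : ℝ) - f n| + C * (C:ℝ)^3 := by ring
          linarith
        have p6 : (1/(C:ℝ)) * ((m:ℝ) - n)
            ≤ (1/(C:ℝ)) * ((C:ℝ) * (|(f m : ℝ) - f n| + (C:ℝ)^3)) :=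
          mul_le_mul_of_nonneg_left p5 (by positivity)
        have p7 : (1/(C:ℝ)) * ((C:ℝ) * (|(f m : ℝ) - f n| + (C:ℝ)^3))
            = |(f m : ℝ) - f n| + (C:ℝ)^3 := by
          field_simp
        linarith
    intro a b
    rcases le_total a b with h | h
    · obtain ⟨q1, q2⟩ := keyR a b h
      have hab : (0:ℝ) ≤ (b:ℝ) - a := by
        have : (a:ℝ) ≤ b := by exact_mod_cast h
        linarith
      constructor
      · rw [abs_sub_comm ((a:ℝ)), abs_sub_comm ((f a : ℝ)), abs_of_nonneg hab]
        exact q2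
      · rw [abs_sub_comm ((a:ℝ)), abs_sub_comm ((f a : ℝ)), abs_of_nonneg hab]
        exact q1
    · obtain ⟨q1, q2⟩ := keyR b a h
      have hab : (0:ℝ) ≤ (a:ℝ) - b := by
        have : (b:ℝ) ≤ a := by exact_mod_cast h
        linarith
      constructor
      · rw [abs_of_nonneg hab]
        exact q2
      · rw [abs_of_nonneg hab]
        exact q1
  · intro k
    obtain ⟨w, hw⟩ := hdense k
    exact ⟨w, by exact_mod_cast hw⟩
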